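/- For vectors x_{B,1},...,x_{B,m} ∈ ℝ^{d₁} and x_{T,1},...,x_{T,m} ∈ ℝ^{d₂}, and ε uniform on {±1}^m, one has E_ε[ sup_{v₁ ∈ S^{d₁−1}, v₂ ∈ S^{d₂−1}} ∑_{i=1}^m ε_i (v₁ᵀ x_{B,i})(v₂ᵀ x_{T,i}) ] ≤ √( ∑_{i=1}^m ‖x_{B,i}‖₂² ‖x_{T,i}‖₂² ). -/

import Mathlib

open scoped BigOperators

/-- The random sign corresponding to a boolean. -/
noncomputable def sgn {m : ℕ} (ε : Fin m → Bool) (i : Fin m) : ℝ :=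
  if ε i then 1 else -1

lemma sgn_sq {m : ℕ} (ε : Fin m → Bool) (i : Fin m) : sgn ε i * sgn ε i = 1 := by
  unfold sgn; split <;> norm_num

/-- Orthogonality of the Rademacher signs. -/
lemma sum_sgn_mul {m : ℕ} (i i' : Fin m) :
    ∑ ε : Fin m → Bool, sgn ε i * sgn ε i' = if i = i' then (2 : ℝ) ^ m else 0 := by
  split
  · next h =>
    subst h
    simp [sgn_sq, Finset.card_univ]
  · next h =>
    have key : ∑ ε : Fin m → Bool, sgn ε i * sgn ε i'
        = ∑ ε : Fin m → Bool, -(sgn ε i * sgn ε i') := by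
      have hbij : Function.Bijective (fun ε : Fin m → Bool => Function.update ε i (!(ε i))) := by
        apply Function.Involutive.bijective
        intro ε
        funext j
        by_cases hj : j = i
        · subst hj; simp
        · simp [Function.update_of_ne hj]
      calc ∑ ε : Fin m → Bool, sgn ε i * sgn ε i'
          = ∑ ε : Fin m → Bool,
              sgn (Function.update ε i (!(ε i))) i * sgn (Function.update ε i (!(ε i))) i' := by
            exact (Function.Bijective.sum_comp hbij _).symm
        _ = ∑ ε : Fin m → Bool, -(sgn ε i * sgn ε i') := by
            apply Finset.sum_congr rfl
            intro ε _
            have h1 : sgn (Function.update ε i (!(ε i))) i = -(sgn ε i) := by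
              unfold sgn; rw [Function.update_self]; cases (ε i) <;> norm_num
            have h2 : sgn (Function.update ε i (!(ε i))) i' = sgn ε i' := by
              unfold sgn; rw [Function.update_of_ne (Ne.symm h)]
            rw [h1, h2]; ring
    have h2 : (2:ℝ) * ∑ ε : Fin m → Bool, sgn ε i * sgn ε i' = 0 := by
      rw [Finset.sum_neg_distrib] at key; linarith
    linarith

lemma euclid_inner_eq {d : ℕ} (v x : EuclideanSpace ℝ (Fin d)) :
    (inner ℝ v x : ℝ) = ∑ j, v j * x j := by
  simp [PiLp.inner_apply, RCLike.inner_apply, conj_trivial, mul_comm]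

lemma euclid_norm_sq {d : ℕ} (v : EuclideanSpace ℝ (Fin d)) : ‖v‖ ^ 2 = ∑ j, v j ^ 2 := by
  rw [EuclideanSpace.norm_eq, Real.sq_sqrt (by positivity)]
  simp

lemma bilinear_rearrange {d1 d2 m : ℕ} (ε : Fin m → Bool)
    (xB : Fin m → EuclideanSpace ℝ (Fin d1)) (xT : Fin m → EuclideanSpace ℝ (Fin d2))
    (v₁ : EuclideanSpace ℝ (Fin d1)) (v₂ : EuclideanSpace ℝ (Fin d2)) :
    (∑ i, sgn ε i * (∑ j, v₁ j * xB i j) * (∑ k, v₂ k * xT i k))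
      = ∑ p : Fin d1 × Fin d2, (v₁ p.1 * v₂ p.2) * (∑ i, sgn ε i * xB i p.1 * xT i p.2) := by
  calc ∑ i, sgn ε i * (∑ j, v₁ j * xB i j) * (∑ k, v₂ k * xT i k)
      = ∑ i, ∑ j, ∑ k, sgn ε i * (v₁ j * xB i j) * (v₂ k * xT i k) := by
        refine Finset.sum_congr rfl fun i _ => ?_
        rw [mul_assoc, Finset.sum_mul_sum, Finset.mul_sum]
        exact Finset.sum_congr rfl fun j _ => by
          rw [Finset.mul_sum]
          exact Finset.sum_congr rfl fun k _ => by ring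
    _ = ∑ j, ∑ i, ∑ k, sgn ε i * (v₁ j * xB i j) * (v₂ k * xT i k) := Finset.sum_comm
    _ = ∑ j, ∑ k, ∑ i, sgn ε i * (v₁ j * xB i j) * (v₂ k * xT i k) :=
        Finset.sum_congr rfl fun j _ => Finset.sum_comm
    _ = ∑ j, ∑ k, (v₁ j * v₂ k) * (∑ i, sgn ε i * xB i j * xT i k) := by
        refine Finset.sum_congr rfl fun j _ => Finset.sum_congr rfl fun k _ => ?_
        rw [Finset.mul_sum]
        exact Finset.sum_congr rfl fun i _ => by ring
    _ = ∑ p : Fin d1 × Fin d2, (v₁ p.1 * v₂ p.2) * (∑ i, sgn ε i * xB i p.1 * xT i p.2) := by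
        rw [Fintype.sum_prod_type]

/-- The expected supremum over pairs of unit vectors `(v₁, v₂)` of
`∑ᵢ εᵢ (v₁ᵀ x_{B,i})(v₂ᵀ x_{T,i})` is at most `√(∑ᵢ ‖x_{B,i}‖² ‖x_{T,i}‖²)`. -/
theorem stmt2 {d1 d2 m : ℕ}
    (xB : Fin m → EuclideanSpace ℝ (Fin d1)) (xT : Fin m → EuclideanSpace ℝ (Fin d2)) :
    (1 / 2 ^ m : ℝ) * ∑ ε : Fin m → Bool,
        ⨆ v : {v : EuclideanSpace ℝ (Fin d1) // ‖v‖ = 1} ×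
              {w : EuclideanSpace ℝ (Fin d2) // ‖w‖ = 1},
          ∑ i, sgn ε i * (inner ℝ v.1.1 (xB i) : ℝ) * (inner ℝ v.2.1 (xT i) : ℝ) ≤
      Real.sqrt (∑ i, ‖xB i‖ ^ 2 * ‖xT i‖ ^ 2) := by
  classical
  -- The "matrix" T ε and its Frobenius norm N ε
  set T : (Fin m → Bool) → Fin d1 × Fin d2 → ℝ :=
    fun ε p => ∑ i, sgn ε i * xB i p.1 * xT i p.2 with hT
  set N : (Fin m → Bool) → ℝ := fun ε => Real.sqrt (∑ p : Fin d1 × Fin d2, (T ε p) ^ 2) with hN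
  have hNnonneg : ∀ ε, 0 ≤ N ε := fun ε => Real.sqrt_nonneg _
  set S : ℝ := ∑ i, ‖xB i‖ ^ 2 * ‖xT i‖ ^ 2 with hS
  have hSnonneg : 0 ≤ S :=
    Finset.sum_nonneg fun i _ => mul_nonneg (sq_nonneg _) (sq_nonneg _)
  -- Step 1: for each ε, the supremum is bounded by N ε
  have step1 : ∀ ε : Fin m → Bool,
      (⨆ v : {v : EuclideanSpace ℝ (Fin d1) // ‖v‖ = 1} ×
              {w : EuclideanSpace ℝ (Fin d2) // ‖w‖ = 1},
          ∑ i, sgn ε i * (inner ℝ v.1.1 (xB i) : ℝ) * (inner ℝ v.2.1 (xT i) : ℝ)) ≤ N ε := by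
    intro ε
    refine Real.iSup_le (fun v => ?_) (hNnonneg ε)
    obtain ⟨⟨v₁, hv₁⟩, ⟨v₂, hv₂⟩⟩ := v
    simp only
    have hrw : (∑ i, sgn ε i * (inner ℝ v₁ (xB i) : ℝ) * (inner ℝ v₂ (xT i) : ℝ))
        = ∑ p : Fin d1 × Fin d2, (v₁ p.1 * v₂ p.2) * T ε p := by
      simp only [euclid_inner_eq]
      exact bilinear_rearrange ε xB xT v₁ v₂
    rw [hrw]
    have hv₁' : ∑ j, v₁ j ^ 2 = 1 := by
      have := euclid_norm_sq v₁; rw [hv₁] at this; simpa using this.symm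
    have hv₂' : ∑ k, v₂ k ^ 2 = 1 := by
      have := euclid_norm_sq v₂; rw [hv₂] at this; simpa using this.symm
    have hw : ∑ p : Fin d1 × Fin d2, (v₁ p.1 * v₂ p.2) ^ 2 = 1 := by
      rw [Fintype.sum_prod_type]
      simp only [mul_pow]
      rw [← Finset.sum_mul_sum]
      rw [hv₁', hv₂']; norm_num
    have cs := Finset.sum_mul_sq_le_sq_mul_sq Finset.univ
      (fun p : Fin d1 × Fin d2 => v₁ p.1 * v₂ p.2) (fun p => T ε p)
    rw [hw, one_mul] at cs
    calc ∑ p : Fin d1 × Fin d2, (v₁ p.1 * v₂ p.2) * T ε p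
        ≤ |∑ p : Fin d1 × Fin d2, (v₁ p.1 * v₂ p.2) * T ε p| := le_abs_self _
      _ = Real.sqrt ((∑ p : Fin d1 × Fin d2, (v₁ p.1 * v₂ p.2) * T ε p) ^ 2) :=
          (Real.sqrt_sq_eq_abs _).symm
      _ ≤ N ε := Real.sqrt_le_sqrt cs
  -- Step 3: the second moment identity
  have step3 : ∑ ε : Fin m → Bool, (N ε) ^ 2 = 2 ^ m * S := by
    have hNsq : ∀ ε, (N ε) ^ 2 = ∑ p : Fin d1 × Fin d2, (T ε p) ^ 2 := fun ε =>
      Real.sq_sqrt (Finset.sum_nonneg fun p _ => sq_nonneg _)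
    calc ∑ ε : Fin m → Bool, (N ε) ^ 2
        = ∑ ε : Fin m → Bool, ∑ p : Fin d1 × Fin d2, (T ε p) ^ 2 :=
          Finset.sum_congr rfl fun ε _ => hNsq ε
      _ = ∑ p : Fin d1 × Fin d2, ∑ ε : Fin m → Bool, (T ε p) ^ 2 := Finset.sum_comm
      _ = ∑ p : Fin d1 × Fin d2, (2:ℝ) ^ m * ∑ i, (xB i p.1) ^ 2 * (xT i p.2) ^ 2 := by
          refine Finset.sum_congr rfl fun p _ => ?_
          calc ∑ ε : Fin m → Bool, (T ε p) ^ 2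
              = ∑ ε : Fin m → Bool, ∑ i, ∑ i',
                  (xB i p.1 * xT i p.2) * (xB i' p.1 * xT i' p.2) * (sgn ε i * sgn ε i') := by
                refine Finset.sum_congr rfl fun ε _ => ?_
                rw [sq, hT, Finset.sum_mul_sum]
                exact Finset.sum_congr rfl fun i _ => Finset.sum_congr rfl fun i' _ => by ring
            _ = ∑ i, ∑ i', ∑ ε : Fin m → Bool,
                  (xB i p.1 * xT i p.2) * (xB i' p.1 * xT i' p.2) * (sgn ε i * sgn ε i') := by
                rw [Finset.sum_comm]
                exact Finset.sum_congr rfl fun i _ => Finset.sum_comm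
            _ = ∑ i, ∑ i', (xB i p.1 * xT i p.2) * (xB i' p.1 * xT i' p.2) *
                  (if i = i' then (2:ℝ) ^ m else 0) := by
                refine Finset.sum_congr rfl fun i _ => Finset.sum_congr rfl fun i' _ => ?_
                rw [← Finset.mul_sum, sum_sgn_mul]
            _ = ∑ i, (xB i p.1 * xT i p.2) * (xB i p.1 * xT i p.2) * (2:ℝ) ^ m := by
                refine Finset.sum_congr rfl fun i _ => ?_
                simp only [mul_ite, mul_zero]
                rw [Finset.sum_ite_eq Finset.univ i]
                simp
            _ = (2:ℝ) ^ m * ∑ i, (xB i p.1) ^ 2 * (xT i p.2) ^ 2 := by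
                rw [Finset.mul_sum]
                exact Finset.sum_congr rfl fun i _ => by ring
      _ = (2:ℝ) ^ m * ∑ p : Fin d1 × Fin d2, ∑ i, (xB i p.1) ^ 2 * (xT i p.2) ^ 2 := by
          rw [Finset.mul_sum]
      _ = 2 ^ m * S := by
          congr 1
          rw [Finset.sum_comm]
          refine Finset.sum_congr rfl fun i _ => ?_
          rw [Fintype.sum_prod_type, euclid_norm_sq (xB i), euclid_norm_sq (xT i),
            Finset.sum_mul_sum]
  -- Step 2: average and conclude
  have step2 : (1 / 2 ^ m : ℝ) * ∑ ε : Fin m → Bool, N ε ≤ Real.sqrt S := by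
    have hpos : (0:ℝ) < 2 ^ m := by positivity
    rw [show Real.sqrt S = Real.sqrt S from rfl]
    rw [← Real.sqrt_sq (by positivity : (0:ℝ) ≤ (1 / 2 ^ m : ℝ) * ∑ ε : Fin m → Bool, N ε)]
    · apply Real.sqrt_le_sqrt
      have cs := Finset.sum_mul_sq_le_sq_mul_sq Finset.univ (fun _ : Fin m → Bool => (1:ℝ)) N
      simp only [one_mul, one_pow] at cs
      have hcard : ∑ _ε : Fin m → Bool, (1:ℝ) = 2 ^ m := by
        simp [Finset.card_univ]
      rw [hcard, step3] at cs
      calc ((1 / 2 ^ m : ℝ) * ∑ ε : Fin m → Bool, N ε) ^ 2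
          = (1 / 2 ^ m : ℝ) ^ 2 * (∑ ε : Fin m → Bool, N ε) ^ 2 := by ring
        _ ≤ (1 / 2 ^ m : ℝ) ^ 2 * (2 ^ m * (2 ^ m * S)) := by
            apply mul_le_mul_of_nonneg_left cs (by positivity)
        _ = S := by field_simp
  calc (1 / 2 ^ m : ℝ) * ∑ ε : Fin m → Bool,
        ⨆ v : {v : EuclideanSpace ℝ (Fin d1) // ‖v‖ = 1} ×
              {w : EuclideanSpace ℝ (Fin d2) // ‖w‖ = 1},
          ∑ i, sgn ε i * (inner ℝ v.1.1 (xB i) : ℝ) * (inner ℝ v.2.1 (xT i) : ℝ)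
      ≤ (1 / 2 ^ m : ℝ) * ∑ ε : Fin m → Bool, N ε := by
        apply mul_le_mul_of_nonneg_left _ (by positivity)
        exact Finset.sum_le_sum fun ε _ => step1 ε
    _ ≤ Real.sqrt S := step2
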